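/- Let X be a convex subset of a real normed vector space and let F : X × X → ℝ satisfy: (A1) F is uniformly α-strongly convex in its second argument (for all x,y,z ∈ X, F(z,x) ≥ F(z,y) + ⟨∇₂F(z,y), x−y⟩ + (α/2)‖x−y‖²); (A2) F is uniformly G₂-Lipschitz in its second argument. Let (x_n) be the value-aggregation sequence: x₁ ∈ X and x_{n+1} ∈ argmin_{x∈X} Σ_{k=1}^n F(x_k, x), and write f_n(x) = F(x_n, x). Then for all N ≥ 1: min_{1 ≤ n ≤ N} F(x_n, x_n) ≤ (1/N) Σ_{n=1}^N f_n(x_n) ≤ inf_{x∈X} (1/N) Σ_{n=1}^N f_n(x) + (G₂²/(2α)) · (ln N + 1)/N. -/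

import Mathlib

open Filter Set

lemma slope_tendsto_dir {E : Type*} [NormedAddCommGroup E] [NormedSpace ℝ E]
    {X : Set E} (hX : Convex ℝ X) {f : E → ℝ} {D : E →L[ℝ] ℝ} {y z : E}
    (hy : y ∈ X) (hz : z ∈ X) (hf : HasFDerivWithinAt f D X y) :
    Tendsto (fun s : ℝ => (f (y + s • (z - y)) - f y) / s)
      (nhdsWithin 0 (Set.Ioc (0:ℝ) 1)) (nhds (D (z - y))) := by
  set γ : ℝ → E := fun s => y + s • (z - y) with hγ
  have hmaps : MapsTo γ (Icc (0:ℝ) 1) X := fun s hs => hX.add_smul_sub_mem hy hz hs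
  have hγd : HasDerivWithinAt γ (z - y) (Icc (0:ℝ) 1) 0 := by
    have : HasDerivAt γ ((1:ℝ) • (z - y)) 0 :=
      ((hasDerivAt_id (0:ℝ)).smul_const (z - y)).const_add y
    simpa using this.hasDerivWithinAt
  have hcomp : HasDerivWithinAt (f ∘ γ) (D (z - y)) (Icc (0:ℝ) 1) 0 := by
    refine HasFDerivWithinAt.comp_hasDerivWithinAt_of_eq (x := (0:ℝ)) hf hγd hmaps ?_
    simp [hγ]
  have := hasDerivWithinAt_iff_tendsto_slope.mp hcomp
  rw [Set.Icc_diff_left] at this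
  refine this.congr fun s => ?_
  simp only [slope_def_field, Function.comp, hγ]
  norm_num

lemma neBot_Ioc01 : (nhdsWithin (0:ℝ) (Set.Ioc (0:ℝ) 1)).NeBot := by
  apply mem_closure_iff_nhdsWithin_neBot.mp
  rw [closure_Ioc (by norm_num : (0:ℝ) ≠ 1)]
  exact ⟨le_refl 0, by norm_num⟩

lemma dir_deriv_nonneg {E : Type*} [NormedAddCommGroup E] [NormedSpace ℝ E]
    {X : Set E} (hX : Convex ℝ X) {f : E → ℝ} {D : E →L[ℝ] ℝ} {y z : E}
    (hy : y ∈ X) (hz : z ∈ X) (hf : HasFDerivWithinAt f D X y)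
    (hmin : ∀ w ∈ X, f y ≤ f w) : 0 ≤ D (z - y) := by
  have h := slope_tendsto_dir hX hy hz hf
  have : (nhdsWithin (0:ℝ) (Set.Ioc (0:ℝ) 1)).NeBot := neBot_Ioc01
  refine ge_of_tendsto h ?_
  filter_upwards [self_mem_nhdsWithin] with s hs
  exact div_nonneg (sub_nonneg.mpr
    (hmin _ (hX.add_smul_sub_mem hy hz ⟨hs.1.le, hs.2⟩))) hs.1.le

lemma dir_deriv_abs_le {E : Type*} [NormedAddCommGroup E] [NormedSpace ℝ E]
    {X : Set E} (hX : Convex ℝ X) {f : E → ℝ} {D : E →L[ℝ] ℝ} {y z : E} {G : ℝ}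
    (hy : y ∈ X) (hz : z ∈ X) (hf : HasFDerivWithinAt f D X y)
    (hlip : ∀ w ∈ X, |f w - f y| ≤ G * ‖w - y‖) : |D (z - y)| ≤ G * ‖z - y‖ := by
  have h := (slope_tendsto_dir hX hy hz hf).abs
  have : (nhdsWithin (0:ℝ) (Set.Ioc (0:ℝ) 1)).NeBot := neBot_Ioc01
  refine le_of_tendsto h ?_
  filter_upwards [self_mem_nhdsWithin] with s hs
  have hmem := hX.add_smul_sub_mem hy hz ⟨hs.1.le, hs.2⟩
  have hl := hlip _ hmem
  rw [abs_div, abs_of_pos hs.1, div_le_iff₀ hs.1]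
  calc |f (y + s • (z - y)) - f y| ≤ G * ‖y + s • (z - y) - y‖ := hl
    _ = G * ‖z - y‖ * s := by
        rw [add_sub_cancel_left, norm_smul, Real.norm_eq_abs, abs_of_pos hs.1]; ring

lemma harmonic_le_log (N : ℕ) (hN : 1 ≤ N) :
    ∑ t ∈ Finset.Icc 1 N, (1:ℝ)/t ≤ Real.log N + 1 := by
  induction N with
  | zero => omega
  | succ n ih =>
    rcases Nat.lt_or_ge 1 (n+1) with h|h
    · have hn : 1 ≤ n := by omega
      have ihn := ih hn
      rw [Finset.sum_Icc_succ_top (by omega : 1 ≤ n+1)]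
      have hn0 : (0:ℝ) < n := by exact_mod_cast hn
      have hn1 : (0:ℝ) < (n:ℝ)+1 := by linarith
      have hlog : Real.log ((n:ℝ)/((n:ℝ)+1)) ≤ (n:ℝ)/((n:ℝ)+1) - 1 :=
        Real.log_le_sub_one_of_pos (by positivity)
      rw [Real.log_div (ne_of_gt hn0) (ne_of_gt hn1)] at hlog
      have key : (1:ℝ)/((n:ℝ)+1) ≤ Real.log ((n:ℝ)+1) - Real.log n := by
        have : (n:ℝ)/((n:ℝ)+1) - 1 = -(1/((n:ℝ)+1)) := by field_simp; ring
        rw [this] at hlog; linarith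
      have : ((n+1:ℕ):ℝ) = (n:ℝ)+1 := by push_cast; ring
      rw [this]
      linarith
    · have : n = 0 := by omega
      subst this
      simp



/-- Classical guarantee for value aggregation, Theorem 1 of the paper.
Under uniform `α`-strong convexity and uniform `G₂`-Lipschitzness of `F` in its second
argument, the Follow-the-Leader sequence satisfies
`min_{1 ≤ n ≤ N} F(x_n, x_n) ≤ (1/N) Σ f_n(x_n) ≤ inf_X (1/N) Σ f_n + (G₂²/(2α))(ln N + 1)/N`. -/
theorem stmt_2
    {E : Type*} [NormedAddCommGroup E] [NormedSpace ℝ E]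
    (X : Set E) (hX : Convex ℝ X)
    (F : E → E → ℝ) (D2F : E → E → (E →L[ℝ] ℝ))
    (α G₂ : ℝ) (hα : 0 < α) (hG₂ : 0 < G₂)
    (hgrad : ∀ z ∈ X, ∀ y ∈ X, HasFDerivWithinAt (F z) (D2F z y) X y)
    (hA1 : ∀ z ∈ X, ∀ y ∈ X, ∀ x ∈ X,
      F z x ≥ F z y + D2F z y (x - y) + α / 2 * ‖x - y‖ ^ 2)
    (hA2 : ∀ z ∈ X, ∀ x ∈ X, ∀ y ∈ X, |F z x - F z y| ≤ G₂ * ‖x - y‖)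
    (x : ℕ → E) (hmem : ∀ n, 1 ≤ n → x n ∈ X)
    (hftl : ∀ n, 1 ≤ n → ∀ y ∈ X,
      ∑ k ∈ Finset.Icc 1 n, F (x k) (x (n + 1)) ≤ ∑ k ∈ Finset.Icc 1 n, F (x k) y)
    (N : ℕ) (hN : 1 ≤ N) :
    (Finset.Icc 1 N).inf' (Finset.nonempty_Icc.mpr hN) (fun n => F (x n) (x n)) ≤
        (1 / (N : ℝ)) * ∑ n ∈ Finset.Icc 1 N, F (x n) (x n) ∧
    (1 / (N : ℝ)) * ∑ n ∈ Finset.Icc 1 N, F (x n) (x n) ≤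
        sInf ((fun y => (1 / (N : ℝ)) * ∑ n ∈ Finset.Icc 1 N, F (x n) y) '' X) +
          G₂ ^ 2 / (2 * α) * (Real.log N + 1) / N := by
  
  have hNpos : (0:ℝ) < N := by exact_mod_cast hN
  set S : ℕ → E → ℝ := fun n y => ∑ k ∈ Finset.Icc 1 n, F (x k) y with hSdef
  have hmemI : ∀ n k, k ∈ Finset.Icc 1 n → x k ∈ X := fun n k hk =>
    hmem k (Finset.mem_Icc.mp hk).1
  have hgradS : ∀ n, ∀ y ∈ X, HasFDerivWithinAt (S n)
      (∑ k ∈ Finset.Icc 1 n, D2F (x k) y) X y := fun n y hy =>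
    HasFDerivWithinAt.fun_sum fun k hk => hgrad (x k) (hmemI n k hk) y hy
  -- strong convexity of the aggregates
  have hA1S : ∀ n : ℕ, ∀ y ∈ X, ∀ w ∈ X,
      S n y + (∑ k ∈ Finset.Icc 1 n, (D2F (x k) y) (w - y))
        + (n:ℝ) * (α / 2 * ‖w - y‖ ^ 2) ≤ S n w := by
    intro n y hy w hw
    have h := Finset.sum_le_sum (s := Finset.Icc 1 n)
      (f := fun k => F (x k) y + (D2F (x k) y) (w - y) + α / 2 * ‖w - y‖ ^ 2)
      (g := fun k => F (x k) w)
      (fun k hk => hA1 (x k) (hmemI n k hk) y hy w hw)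
    simp only [Finset.sum_add_distrib, Finset.sum_const, Nat.card_Icc, nsmul_eq_mul,
      Nat.add_sub_cancel] at h
    exact h
  -- per-step bound
  have hstep : ∀ m : ℕ, S (m+1) (x (m+1)) - S (m+1) (x (m+2)) ≤ G₂^2 / (2 * α * (m+1)) := by
    intro m
    have hyX : x (m+1) ∈ X := hmem _ (by omega)
    have hzX : x (m+2) ∈ X := hmem _ (by omega)
    have h1 := hA1S (m+1) (x (m+1)) hyX (x (m+2)) hzX
    have hsplit : ∑ k ∈ Finset.Icc 1 (m+1), (D2F (x k) (x (m+1))) (x (m+2) - x (m+1))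
        = ∑ k ∈ Finset.Icc 1 m, (D2F (x k) (x (m+1))) (x (m+2) - x (m+1))
          + (D2F (x (m+1)) (x (m+1))) (x (m+2) - x (m+1)) :=
      Finset.sum_Icc_succ_top (by omega) _
    have h2 : 0 ≤ ∑ k ∈ Finset.Icc 1 m, (D2F (x k) (x (m+1))) (x (m+2) - x (m+1)) := by
      rcases Nat.eq_zero_or_pos m with rfl|hm
      · simp
      · have hD := hgradS m (x (m+1)) hyX
        have hmin : ∀ w ∈ X, S m (x (m+1)) ≤ S m w := fun w hw => hftl m hm w hw
        have h0 := dir_deriv_nonneg hX hyX hzX hD hmin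
        simpa [ContinuousLinearMap.sum_apply] using h0
    have h3 : |(D2F (x (m+1)) (x (m+1))) (x (m+2) - x (m+1))|
        ≤ G₂ * ‖x (m+2) - x (m+1)‖ := by
      refine dir_deriv_abs_le hX hyX hzX (hgrad (x (m+1)) hyX (x (m+1)) hyX) ?_
      intro w hw; exact hA2 (x (m+1)) hyX w hw (x (m+1)) hyX
    set a := ‖x (m+2) - x (m+1)‖ with ha
    have ha0 : 0 ≤ a := norm_nonneg _
    have hT : (1:ℝ) ≤ ((m+1:ℕ):ℝ) := by exact_mod_cast Nat.succ_le_succ (Nat.zero_le m)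
    rw [le_div_iff₀ (by push_cast; positivity)]
    have habs := neg_abs_le ((D2F (x (m+1)) (x (m+1))) (x (m+2) - x (m+1)))
    push_cast at h1 hT ⊢
    have hq : S (m+1) (x (m+1)) - S (m+1) (x (m+2))
        ≤ G₂ * a - ((m:ℝ)+1) * (α/2 * a^2) := by linarith
    have hmul := mul_le_mul_of_nonneg_right hq
      (by positivity : (0:ℝ) ≤ 2 * α * ((m:ℝ)+1))
    nlinarith [hmul, sq_nonneg (((m:ℝ)+1) * α * a - G₂)]
  -- regret identity
  have hreg : ∀ n : ℕ, 1 ≤ n →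
      ∑ t ∈ Finset.Icc 1 n, F (x t) (x t) - S n (x (n+1))
        = ∑ t ∈ Finset.Icc 1 n, (S t (x t) - S t (x (t+1))) := by
    intro n
    induction n with
    | zero => omega
    | succ m ih =>
      intro _
      rcases Nat.eq_zero_or_pos m with rfl|hm
      · simp [hSdef]
      · have ihm := ih hm
        rw [Finset.sum_Icc_succ_top (by omega : 1 ≤ m+1),
            Finset.sum_Icc_succ_top (by omega : 1 ≤ m+1)]
        have hS1 : S (m+1) (x (m+1)) = S m (x (m+1)) + F (x (m+1)) (x (m+1)) :=
          Finset.sum_Icc_succ_top (by omega) _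
        linarith
  -- summed step bound
  have hsumstep : ∑ t ∈ Finset.Icc 1 N, (S t (x t) - S t (x (t+1)))
      ≤ G₂^2 / (2*α) * (Real.log N + 1) := by
    calc ∑ t ∈ Finset.Icc 1 N, (S t (x t) - S t (x (t+1)))
        ≤ ∑ t ∈ Finset.Icc 1 N, G₂^2 / (2*α) * (1/(t:ℝ)) := by
          refine Finset.sum_le_sum fun t ht => ?_
          obtain ⟨ht1, _⟩ := Finset.mem_Icc.mp ht
          obtain ⟨m, rfl⟩ : ∃ m, t = m + 1 := ⟨t-1, by omega⟩
          have h := hstep m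
          have hc : ((m+1:ℕ):ℝ) = (m:ℝ) + 1 := by push_cast; ring
          rw [show G₂^2/(2*α) * (1/((m+1:ℕ):ℝ)) = G₂^2/(2*α*((m:ℝ)+1)) by
            rw [hc, div_mul_div_comm, mul_one]]
          exact h
      _ = G₂^2 / (2*α) * ∑ t ∈ Finset.Icc 1 N, (1/(t:ℝ)) := by rw [Finset.mul_sum]
      _ ≤ G₂^2 / (2*α) * (Real.log N + 1) :=
          mul_le_mul_of_nonneg_left (harmonic_le_log N hN) (by positivity)
  constructor
  · -- min ≤ average
    have hlow : ∀ n ∈ Finset.Icc 1 N,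
        (Finset.Icc 1 N).inf' (Finset.nonempty_Icc.mpr hN) (fun n => F (x n) (x n))
          ≤ F (x n) (x n) := fun n hn => Finset.inf'_le _ hn
    have hsum := Finset.card_nsmul_le_sum (Finset.Icc 1 N) (fun n => F (x n) (x n))
      ((Finset.Icc 1 N).inf' (Finset.nonempty_Icc.mpr hN) (fun n => F (x n) (x n))) hlow
    rw [Nat.card_Icc, Nat.add_sub_cancel, nsmul_eq_mul] at hsum
    set c := (Finset.Icc 1 N).inf' (Finset.nonempty_Icc.mpr hN) (fun n => F (x n) (x n))
    have := mul_le_mul_of_nonneg_left hsum (le_of_lt (one_div_pos.mpr hNpos))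
    calc c = (1/(N:ℝ)) * ((N:ℝ) * c) := by field_simp
      _ ≤ (1/(N:ℝ)) * ∑ n ∈ Finset.Icc 1 N, F (x n) (x n) := this
  · -- average ≤ inf + bound
    have hXne : ((fun y => (1/(N:ℝ)) * ∑ n ∈ Finset.Icc 1 N, F (x n) y) '' X).Nonempty :=
      ⟨_, Set.mem_image_of_mem _ (hmem 1 le_rfl)⟩
    have key : ∀ b ∈ ((fun y => (1/(N:ℝ)) * ∑ n ∈ Finset.Icc 1 N, F (x n) y) '' X),
        (1/(N:ℝ)) * ∑ n ∈ Finset.Icc 1 N, F (x n) (x n)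
          - G₂ ^ 2 / (2 * α) * (Real.log N + 1) / N ≤ b := by
      rintro b ⟨y, hyX, rfl⟩
      have hm : S N (x (N+1)) ≤ S N y := hftl N hN y hyX
      have hr := hreg N hN
      have h1 : ∑ t ∈ Finset.Icc 1 N, F (x t) (x t)
          ≤ S N y + G₂^2 / (2*α) * (Real.log N + 1) := by linarith
      have h2 := mul_le_mul_of_nonneg_left h1 (le_of_lt (one_div_pos.mpr hNpos))
      have h3 : (1/(N:ℝ)) * (S N y + G₂^2 / (2*α) * (Real.log N + 1))
          = (1/(N:ℝ)) * S N y + G₂ ^ 2 / (2 * α) * (Real.log N + 1) / N := by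
        field_simp
      show (1/(N:ℝ)) * ∑ n ∈ Finset.Icc 1 N, F (x n) (x n)
          - G₂ ^ 2 / (2 * α) * (Real.log N + 1) / N ≤ (1/(N:ℝ)) * S N y
      linarith
    have := le_csInf hXne key
    linarith
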